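/- arXiv:2003.06850 — 11 statements merged into one kernel-verified Lean document; each statement's English description precedes it below -/
import Mathlib

section
/- For real numbers θ_i < θ_j < θ_k, one has sinh³(θ_k−θ_i)·cosh(θ_i) − sinh³(θ_k−θ_j)·cosh(θ_j) > 0. -/
open Real

theorem stmt1 (θi θj θk : ℝ) (h1 : θi < θj) (h2 : θj < θk) :
    (Real.sinh (θk - θi))^3 * Real.cosh θi - (Real.sinh (θk - θj))^3 * Real.cosh θj > 0 := by
  have key : StrictAntiOn (fun θ => (Real.sinh (θk - θ))^3 * Real.cosh θ) (Set.Iic θk) := by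
    apply strictAntiOn_of_deriv_neg (convex_Iic θk)
    · fun_prop
    · intro x hx
      rw [interior_Iic] at hx
      have h1' : HasDerivAt (fun θ : ℝ => θk - θ) (-1) x := (hasDerivAt_id x).const_sub θk
      have h2' : HasDerivAt (fun θ : ℝ => Real.sinh (θk - θ)) (Real.cosh (θk - x) * (-1)) x :=
        (Real.hasDerivAt_sinh (θk - x)).comp x h1'
      have h3' : HasDerivAt (fun θ : ℝ => (Real.sinh (θk - θ))^3)
          (3 * (Real.sinh (θk - x))^2 * (Real.cosh (θk - x) * (-1))) x := by
        simpa using h2'.fun_pow 3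
      have h4' : HasDerivAt (fun θ => (Real.sinh (θk - θ))^3 * Real.cosh θ)
          (3 * (Real.sinh (θk - x))^2 * (Real.cosh (θk - x) * (-1)) * Real.cosh x
            + (Real.sinh (θk - x))^3 * Real.sinh x) x :=
        h3'.mul (Real.hasDerivAt_cosh x)
      rw [h4'.deriv]
      have hA : 0 < Real.sinh (θk - x) := Real.sinh_pos_iff.2 (sub_pos.2 (Set.mem_Iio.1 hx))
      have hC : (Real.cosh (θk - x))^2 = 1 + (Real.sinh (θk - x))^2 := by
        rw [Real.cosh_sq]; ring
      have hc : (Real.cosh x)^2 = 1 + (Real.sinh x)^2 := by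
        rw [Real.cosh_sq]; ring
      have hCp : 0 < Real.cosh (θk - x) := Real.cosh_pos _
      have hcp : 0 < Real.cosh x := Real.cosh_pos _
      have habs : Real.sinh (θk - x) * Real.sinh x < Real.cosh (θk - x) * Real.cosh x := by
        have hcs := Real.cosh_sub (θk - x) x
        have := Real.cosh_pos (θk - x - x)
        linarith
      have hkey : 0 < 3 * Real.cosh (θk - x) * Real.cosh x
          - Real.sinh (θk - x) * Real.sinh x := by nlinarith [mul_pos hCp hcp]
      nlinarith [mul_pos (mul_pos hA hA) hkey]
  have := key (Set.mem_Iic.2 (le_of_lt (h1.trans h2))) (Set.mem_Iic.2 h2.le) h1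
  simpa using sub_pos.2 this
end

section
/- If −π/6 < θ_k < θ_i < θ_j < π/6, then sin³(θ_j−θ_k)·cos(θ_j) − sin³(θ_i−θ_k)·cos(θ_i) > 0. -/
open Real

theorem stmt2 (θk θi θj : ℝ) (hlb : -(Real.pi/6) < θk) (h1 : θk < θi) (h2 : θi < θj)
    (hub : θj < Real.pi/6) :
    (Real.sin (θj - θk))^3 * Real.cos θj - (Real.sin (θi - θk))^3 * Real.cos θi > 0 := by
  have hpi := Real.pi_pos
  have hmono : StrictMonoOn (fun θ => (Real.sin (θ - θk))^3 * Real.cos θ)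
      (Set.Icc θk (Real.pi/6)) := by
    apply strictMonoOn_of_deriv_pos (convex_Icc _ _)
    · exact Continuous.continuousOn (by continuity)
    · intro x hx
      rw [interior_Icc] at hx
      obtain ⟨hx1, hx2⟩ := hx
      have hd : HasDerivAt (fun θ => (Real.sin (θ - θk))^3 * Real.cos θ)
          ((Real.sin (x - θk))^2 *
            (3 * Real.cos (x - θk) * Real.cos x - Real.sin (x - θk) * Real.sin x)) x := by
        have h1' : HasDerivAt (fun θ : ℝ => θ - θk) 1 x := (hasDerivAt_id x).sub_const θk
        have h2' : HasDerivAt (fun θ => Real.sin (θ - θk)) (Real.cos (x - θk) * 1) x :=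
          (Real.hasDerivAt_sin _).comp x h1'
        have h3' : HasDerivAt (fun θ => (Real.sin (θ - θk))^3)
            ((3 : ℕ) * (Real.sin (x - θk))^(3-1) * (Real.cos (x - θk) * 1)) x := h2'.pow 3
        have h4' : HasDerivAt (fun θ => (Real.sin (θ - θk))^3 * Real.cos θ) _ x :=
          h3'.mul (Real.hasDerivAt_cos x)
        convert h4' using 1
        push_cast
        ring
      rw [hd.deriv]
      -- bounds
      have hθk : -(Real.pi/6) < θk := hlb
      have hxub : x < Real.pi/6 := hx2
      have hxlb : -(Real.pi/6) < x := lt_trans hθk hx1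
      have hdiff0 : 0 < x - θk := by linarith
      have hdiffub : x - θk < Real.pi/3 := by linarith
      have hs0 : 0 < Real.sin (x - θk) :=
        Real.sin_pos_of_pos_of_lt_pi hdiff0 (by linarith)
      have hsub : Real.sin (x - θk) < Real.sqrt 3 / 2 := by
        have := Real.sin_lt_sin_of_lt_of_le_pi_div_two (x := x - θk) (y := Real.pi/3)
          (by linarith) (by linarith) hdiffub
        rwa [Real.sin_pi_div_three] at this
      have hsx1 : Real.sin x < 1/2 := by
        have := Real.sin_lt_sin_of_lt_of_le_pi_div_two (x := x) (y := Real.pi/6)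
          (by linarith) (by linarith) hxub
        rwa [Real.sin_pi_div_six] at this
      have hsx2 : -(1/2) < Real.sin x := by
        have := Real.sin_lt_sin_of_lt_of_le_pi_div_two (x := -(Real.pi/6)) (y := x)
          (by linarith) (by linarith) hxlb
        rwa [Real.sin_neg, Real.sin_pi_div_six] at this
      have hc1 : 1/2 < Real.cos (x - θk) := by
        have := Real.cos_lt_cos_of_nonneg_of_le_pi (x := x - θk) (y := Real.pi/3)
          (le_of_lt hdiff0) (by linarith) hdiffub
        rwa [Real.cos_pi_div_three] at this
      have hc2 : Real.sqrt 3 / 2 < Real.cos x := by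
        have habs : |x| < Real.pi/6 := abs_lt.mpr ⟨hxlb, hxub⟩
        have := Real.cos_lt_cos_of_nonneg_of_le_pi (x := |x|) (y := Real.pi/6)
          (abs_nonneg x) (by linarith) habs
        rwa [Real.cos_pi_div_six, Real.cos_abs] at this
      have hsq3 : (Real.sqrt 3)^2 = 3 := Real.sq_sqrt (by norm_num)
      have hsq3pos : (1:ℝ) < Real.sqrt 3 := by nlinarith [Real.sqrt_nonneg 3]
      have hbracket : 0 < 3 * Real.cos (x - θk) * Real.cos x - Real.sin (x - θk) * Real.sin x := by
        nlinarith [mul_pos hs0 hs0]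
      positivity
  have hi : θi ∈ Set.Icc θk (Real.pi/6) := ⟨le_of_lt h1, by linarith⟩
  have hj : θj ∈ Set.Icc θk (Real.pi/6) := ⟨by linarith, le_of_lt hub⟩
  have := hmono hi hj h2
  simp only at this
  linarith
end

section
/- If −π/6 < θ_i < θ_j < θ_k < π/6, then sin³(θ_k−θ_i)·cos(θ_i) − sin³(θ_k−θ_j)·cos(θ_j) > 0. -/
open Real

theorem stmt3 (θi θj θk : ℝ) (hlb : -(Real.pi/6) < θi) (h1 : θi < θj) (h2 : θj < θk)
    (hub : θk < Real.pi/6) :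
    (Real.sin (θk - θi))^3 * Real.cos θi - (Real.sin (θk - θj))^3 * Real.cos θj > 0 := by
  have hpi := Real.pi_pos
  set g : ℝ → ℝ := fun θ => (Real.sin (θk - θ))^3 * Real.cos θ with hg
  have key : StrictAntiOn g (Set.Icc θi θj) := by
    apply strictAntiOn_of_deriv_neg (convex_Icc _ _)
    · fun_prop
    · intro x hx
      rw [interior_Icc] at hx
      have hd : HasDerivAt g (-(3 * (Real.sin (θk - x))^2 * Real.cos (θk - x) * Real.cos x
          + (Real.sin (θk - x))^3 * Real.sin x)) x := by
        have h0 : HasDerivAt (fun θ : ℝ => θk - θ) (-1) x := by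
          simpa using (hasDerivAt_id x).const_sub θk
        have hs : HasDerivAt (fun θ => Real.sin (θk - θ)) (Real.cos (θk - x) * (-1)) x :=
          (Real.hasDerivAt_sin _).comp x h0
        have hp : HasDerivAt (fun θ => (Real.sin (θk - θ))^3)
            (3 * (Real.sin (θk - x))^2 * (Real.cos (θk - x) * (-1))) x := by
          simpa [mul_comm, mul_assoc, mul_left_comm] using hs.fun_pow 3
        have := hp.fun_mul (Real.hasDerivAt_cos x)
        convert this using 1
        exacts [rfl, rfl, by ring]
      rw [hd.deriv]
      have hxlb : -(Real.pi/6) < x := lt_trans hlb hx.1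
      have hxub : x < Real.pi/6 := lt_trans (lt_trans hx.2 h2) hub
      set a := θk - x with ha
      have ha0 : 0 < a := by simp only [ha]; linarith [hx.2]
      have ha3 : a < Real.pi/3 := by simp only [ha]; linarith
      have hsina : 0 < Real.sin a := Real.sin_pos_of_pos_of_lt_pi ha0 (by linarith)
      have hsina' : Real.sin a < Real.sqrt 3 / 2 := by
        have := Real.strictMonoOn_sin
          ⟨by linarith, by linarith⟩ ⟨by linarith, by linarith⟩ ha3
        rwa [Real.sin_pi_div_three] at this
      have hcosa : 1/2 < Real.cos a := by
        have := Real.strictAntiOn_cos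
          ⟨le_of_lt ha0, by linarith⟩ ⟨by linarith, by linarith⟩ ha3
        rwa [Real.cos_pi_div_three] at this
      have hcosx : Real.sqrt 3 / 2 < Real.cos x := by
        have habs : |x| < Real.pi/6 := abs_lt.mpr ⟨hxlb, hxub⟩
        have := Real.strictAntiOn_cos
          ⟨abs_nonneg x, by linarith [abs_lt.mp habs]⟩ ⟨by linarith, by linarith⟩ habs
        rwa [Real.cos_pi_div_six, Real.cos_abs] at this
      have hsinx : -(1/2) < Real.sin x := by
        have := Real.strictMonoOn_sin
          ⟨by linarith, by linarith⟩ ⟨by linarith, by linarith⟩ hxlb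
        rwa [Real.sin_neg, Real.sin_pi_div_six] at this
      have hsq3 : (1:ℝ) < Real.sqrt 3 := by
        nlinarith [Real.sq_sqrt (by norm_num : (3:ℝ) ≥ 0), Real.sqrt_nonneg 3]
      have hs2 : 0 < (Real.sin a)^2 := pow_pos hsina 2
      nlinarith [mul_pos hs2 hsina, mul_pos hs2 (sub_pos.mpr hsina'),
        mul_pos hs2 (sub_pos.mpr hcosa), mul_pos hs2 (sub_pos.mpr hcosx),
        mul_pos (mul_pos hs2 hsina) (by linarith : (0:ℝ) < Real.sin x + 1/2),
        mul_pos hs2 (by linarith : (0:ℝ) < Real.sqrt 3 / 2 - Real.sin a)]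
  have := key (Set.left_mem_Icc.mpr (le_of_lt h1)) (Set.right_mem_Icc.mpr (le_of_lt h1)) h1
  simp only [hg] at this
  linarith
end

section
/- Let m_1, ..., m_n > 0 and define I : (S²)ⁿ → ℝ by I(q) = Σ_i m_i (x_i² + y_i²), where q_i = (x_i, y_i, z_i) ∈ S². Then the set of critical values of I is exactly {Σ_i ε_i m_i : ε_i ∈ {0,1}}. -/
open Real Finset

/-- Criticality of `q ↦ mᵢ(xᵢ² + yᵢ²)` on the sphere at `qᵢ`:
the gradient `(2mᵢxᵢ, 2mᵢyᵢ, 0)` is parallel to `qᵢ`. -/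
def IsCritI (n : ℕ) (m : Fin n → ℝ) (q : Fin n → ℝ × ℝ × ℝ) : Prop :=
  ∀ i, ∃ t : ℝ, (2 * m i * (q i).1, 2 * m i * (q i).2.1, (0 : ℝ)) = t • (q i)

theorem stmt8 (n : ℕ) (m : Fin n → ℝ) (hm : ∀ i, 0 < m i) :
    {v : ℝ | ∃ q : Fin n → ℝ × ℝ × ℝ,
        (∀ i, (q i).1^2 + (q i).2.1^2 + (q i).2.2^2 = 1) ∧
        IsCritI n m q ∧
        v = ∑ i, m i * ((q i).1^2 + (q i).2.1^2)}
      = {v : ℝ | ∃ ε : Fin n → ℝ, (∀ i, ε i = 0 ∨ ε i = 1) ∧ v = ∑ i, ε i * m i} := by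
  ext v
  simp only [Set.mem_setOf_eq]
  constructor
  · rintro ⟨q, hs, hc, hv⟩
    refine ⟨fun i => (q i).1^2 + (q i).2.1^2, fun i => ?_, ?_⟩
    · obtain ⟨t, ht⟩ := hc i
      rw [Prod.ext_iff, Prod.ext_iff] at ht
      simp only [Prod.smul_fst, Prod.smul_snd, smul_eq_mul] at ht
      obtain ⟨h1, h2, h3⟩ := ht
      have hmi := hm i
      by_cases hz : (q i).2.2 = 0
      · right
        show (q i).1^2 + (q i).2.1^2 = 1
        have := hs i
        nlinarith
      · have ht0 : t = 0 := by
          rcases mul_eq_zero.mp h3.symm with h | h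
          · exact h
          · exact absurd h hz
        subst ht0
        left
        show (q i).1^2 + (q i).2.1^2 = 0
        have hx : (q i).1 = 0 := by nlinarith
        have hy : (q i).2.1 = 0 := by nlinarith
        simp [hx, hy]
    · rw [hv]
      exact Finset.sum_congr rfl fun i _ => by ring
  · rintro ⟨ε, hε, hv⟩
    refine ⟨fun i => if ε i = 1 then ((1:ℝ),(0:ℝ),(0:ℝ)) else (0,0,1), fun i => ?_, fun i => ?_, ?_⟩
    · by_cases h : ε i = 1 <;> simp [h]
    · by_cases h : ε i = 1
      · exact ⟨2 * m i, by simp [h, Prod.smul_def, smul_eq_mul]⟩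
      · exact ⟨0, by simp [h, Prod.smul_def]⟩
    · rw [hv]
      refine Finset.sum_congr rfl fun i _ => ?_
      rcases hε i with h | h
      · simp [h]
      · simp [h]
end

section
/- Let q_1, ..., q_n ∈ ℍ³ ⊂ ℝ^{3,1} with pairwise distinct positions, written q_i = (x_i, y_i, z_i, w_i) with x_i²+y_i²+z_i²−w_i² = −1, w_i ≥ 1. Suppose q is an ordinary central configuration, i.e., for each i: Σ_{j≠i} m_i m_j (u_j − (w_j/w_i) u_i)/sinh³(d_{ij}) = 2λ m_i (x_i, y_i, 0), where u_i = (x_i, y_i, z_i), cosh(d_{ij}) = −q_i·q_j (Minkowski inner product), and not all x_i²+y_i² vanish. Then λ < 0. -/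
open Real Finset

theorem stmt10 (n : ℕ) (hn : 2 ≤ n)
    (m : Fin n → ℝ) (hm : ∀ i, 0 < m i)
    (x y z w : Fin n → ℝ)
    -- points lie on the hyperboloid ℍ³
    (hhyp : ∀ i, (x i)^2 + (y i)^2 + (z i)^2 - (w i)^2 = -1)
    (hw : ∀ i, 1 ≤ w i)
    -- pairwise distinct positions
    (hdist : ∀ i j, i ≠ j → (x i, y i, z i, w i) ≠ (x j, y j, z j, w j))
    -- mutual distances: cosh dᵢⱼ = −qᵢ·qⱼ (Minkowski inner product), dᵢⱼ > 0
    (d : Fin n → Fin n → ℝ)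
    (hd : ∀ i j, i ≠ j →
      Real.cosh (d i j) = -(x i * x j + y i * y j + z i * z j - w i * w j))
    (hdpos : ∀ i j, i ≠ j → 0 < d i j)
    (lam : ℝ)
    -- the central configuration equations, componentwise in u = (x, y, z)
    (hccx : ∀ i, ∑ j ∈ Finset.univ.erase i,
        m i * m j * (x j - (w j / w i) * x i) / (Real.sinh (d i j))^3
        = 2 * lam * m i * x i)
    (hccy : ∀ i, ∑ j ∈ Finset.univ.erase i,
        m i * m j * (y j - (w j / w i) * y i) / (Real.sinh (d i j))^3
        = 2 * lam * m i * y i)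
    (hccz : ∀ i, ∑ j ∈ Finset.univ.erase i,
        m i * m j * (z j - (w j / w i) * z i) / (Real.sinh (d i j))^3
        = 0)
    -- ordinary: not all xᵢ² + yᵢ² vanish
    (hord : ∃ i, (x i)^2 + (y i)^2 ≠ 0) :
    lam < 0 := by
  have hwpos : ∀ i, 0 < w i := fun i => lt_of_lt_of_le one_pos (hw i)
  set S : Fin n → Fin n → ℝ := fun i j => (Real.sinh (d i j))^3 with hS
  have hSpos : ∀ i j, i ≠ j → 0 < S i j := fun i j h =>
    pow_pos (Real.sinh_pos_iff.2 (hdpos i j h)) 3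
  have hSsymm : ∀ i j, i ≠ j → S i j = S j i := by
    intro i j h
    have hc : Real.cosh (d i j) = Real.cosh (d j i) := by
      rw [hd i j h, hd j i h.symm]; ring
    have p1 := Real.sinh_pos_iff.2 (hdpos i j h)
    have p2 := Real.sinh_pos_iff.2 (hdpos j i h.symm)
    have hsq : Real.sinh (d i j) ^ 2 = Real.sinh (d j i) ^ 2 := by
      have e1 := Real.cosh_sq (d i j)
      have e2 := Real.cosh_sq (d j i)
      have hc2 : Real.cosh (d i j) ^ 2 = Real.cosh (d j i) ^ 2 := by rw [hc]
      linarith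
    have h1 : Real.sinh (d i j) = Real.sinh (d j i) := by nlinarith
    simp only [hS, h1]
  set g : Fin n → Fin n → ℝ := fun i j => if i = j then 0 else
    (m i * m j / S i j) * (w i * (x i * x j + y i * y j + z i * z j)
      - w j * ((x i)^2 + (y i)^2 + (z i)^2)) with hg
  -- row sums equal the RHS of the central configuration equations
  have key : ∀ i, ∑ j, g i j = 2 * lam * m i * w i * ((x i)^2 + (y i)^2) := by
    intro i
    have e1 : ∑ j ∈ Finset.univ.erase i, g i j = ∑ j, g i j :=
      Finset.sum_erase _ (by simp [hg])
    rw [← e1]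
    have e2 : ∀ j ∈ Finset.univ.erase i, g i j =
        w i * x i * (m i * m j * (x j - (w j / w i) * x i) / (Real.sinh (d i j))^3)
        + w i * y i * (m i * m j * (y j - (w j / w i) * y i) / (Real.sinh (d i j))^3)
        + w i * z i * (m i * m j * (z j - (w j / w i) * z i) / (Real.sinh (d i j))^3) := by
      intro j hj
      have hji : i ≠ j := by
        intro hij; exact (Finset.ne_of_mem_erase hj) hij.symm
      have hSne : S i j ≠ 0 := (hSpos i j hji).ne'
      have hwne : w i ≠ 0 := (hwpos i).ne'
      simp only [hg, if_neg hji, hS]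
      field_simp
      ring
    rw [Finset.sum_congr rfl e2]
    rw [Finset.sum_add_distrib, Finset.sum_add_distrib, ← Finset.mul_sum,
      ← Finset.mul_sum, ← Finset.mul_sum, hccx i, hccy i, hccz i]
    ring
  -- the symmetrized pair terms are nonpositive, and negative off the diagonal
  have pair : ∀ i j, i ≠ j →
      g i j + g j i = (m i * m j / S i j) * ((w i + w j) * (1 - Real.cosh (d i j))) := by
    intro i j h
    simp only [hg, if_neg h, if_neg h.symm]
    rw [← hSsymm i j h]
    have hA : x i * x j + y i * y j + z i * z j = w i * w j - Real.cosh (d i j) := by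
      have := hd i j h; linarith
    have hNi : (x i)^2 + (y i)^2 + (z i)^2 = (w i)^2 - 1 := by
      have := hhyp i; linarith
    have hNj : (x j)^2 + (y j)^2 + (z j)^2 = (w j)^2 - 1 := by
      have := hhyp j; linarith
    linear_combination (m i * m j / S i j * (w i + w j)) * hA
      - (m i * m j / S i j * w j) * hNi - (m i * m j / S i j * w i) * hNj
  have pairneg : ∀ i j, i ≠ j → g i j + g j i < 0 := by
    intro i j h
    rw [pair i j h]
    have hC : 0 < m i * m j / S i j := div_pos (mul_pos (hm i) (hm j)) (hSpos i j h)
    have hcosh : 1 < Real.cosh (d i j) := by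
      have hs := Real.sinh_pos_iff.2 (hdpos i j h)
      have hc := Real.cosh_pos (d i j)
      nlinarith [Real.cosh_sq (d i j)]
    have hww : 0 < w i + w j := by linarith [hwpos i, hwpos j]
    have : (w i + w j) * (1 - Real.cosh (d i j)) < 0 :=
      mul_neg_of_pos_of_neg hww (by linarith)
    exact mul_neg_of_pos_of_neg hC this
  have pairnonpos : ∀ i j, g i j + g j i ≤ 0 := by
    intro i j
    rcases eq_or_ne i j with rfl | h
    · simp [hg]
    · exact (pairneg i j h).le
  -- total
  set P := ∑ i, m i * w i * ((x i)^2 + (y i)^2) with hP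
  have hPpos : 0 < P := by
    obtain ⟨k, hk⟩ := hord
    have hknn : 0 < (x k)^2 + (y k)^2 :=
      lt_of_le_of_ne (by positivity) (Ne.symm hk)
    apply Finset.sum_pos'
      (fun i _ => mul_nonneg (mul_nonneg (hm i).le (hwpos i).le) (by positivity))
    exact ⟨k, Finset.mem_univ k, mul_pos (mul_pos (hm k) (hwpos k)) hknn⟩
  have hT : ∑ i, ∑ j, g i j = 2 * lam * P := by
    rw [Finset.sum_congr rfl (fun i _ => key i), hP, Finset.mul_sum]
    exact Finset.sum_congr rfl (fun i _ => by ring)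
  have hdouble : ∑ i, ∑ j, (g i j + g j i) = 2 * (2 * lam * P) := by
    have : ∑ i : Fin n, ∑ j : Fin n, g j i = ∑ i, ∑ j, g i j := Finset.sum_comm
    simp only [Finset.sum_add_distrib]
    rw [this, hT]; ring
  have hneg : ∑ i, ∑ j, (g i j + g j i) < 0 := by
    set i0 : Fin n := ⟨0, by omega⟩ with hi0
    set i1 : Fin n := ⟨1, by omega⟩ with hi1
    have h01 : i0 ≠ i1 := by
      simp only [hi0, hi1, ne_eq, Fin.mk.injEq]
      omega
    have hlt : ∑ i, ∑ j, (g i j + g j i) < ∑ _i : Fin n, (0 : ℝ) := by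
      apply Finset.sum_lt_sum
      · intro i _
        exact Finset.sum_nonpos (fun j _ => pairnonpos i j)
      · refine ⟨i0, Finset.mem_univ _, ?_⟩
        have h2 : ∑ j, (g i0 j + g j i0) < ∑ _j : Fin n, (0 : ℝ) :=
          Finset.sum_lt_sum (fun j _ => pairnonpos i0 j)
            ⟨i1, Finset.mem_univ _, pairneg i0 i1 h01⟩
        simpa using h2
    simpa using hlt
  rw [hdouble] at hneg
  nlinarith [hPpos]
end

section
/- Suppose θ_1 < ... < θ_n satisfy the geodesic central configuration equations Σ_{j≠i} m_j sinh(θ_j − θ_i)/sinh³(|θ_i − θ_j|) = λ sinh(2θ_i) for all i, with m_i > 0. Define the matrix A by A_{ij} = m_j/sinh³(|θ_i−θ_j|) for i ≠ j and A_{ii} = −Σ_{j≠i} m_j cosh(θ_j)/(cosh(θ_i) sinh³(|θ_i−θ_j|)). Then the vector c₁ = (cosh θ_1, ..., cosh θ_n) satisfies A c₁ = 0, and the vector c₂ = (sinh θ_1, ..., sinh θ_n) satisfies A c₂ = 2λ c₂. -/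
open Real Finset Matrix

theorem stmt12 (n : ℕ)
    (θ : Fin n → ℝ) (hθ : StrictMono θ)
    (m : Fin n → ℝ) (hm : ∀ i, 0 < m i) (lam : ℝ)
    (hcc : ∀ i, ∑ j ∈ Finset.univ.erase i,
        m j * Real.sinh (θ j - θ i) / (Real.sinh |θ i - θ j|)^3
        = lam * Real.sinh (2 * θ i))
    (A : Matrix (Fin n) (Fin n) ℝ)
    (hAoff : ∀ i j, i ≠ j → A i j = m j / (Real.sinh |θ i - θ j|)^3)
    (hAdiag : ∀ i, A i i = - ∑ j ∈ Finset.univ.erase i,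
        m j * Real.cosh (θ j) / (Real.cosh (θ i) * (Real.sinh |θ i - θ j|)^3)) :
    A.mulVec (fun i => Real.cosh (θ i)) = 0 ∧
    A.mulVec (fun i => Real.sinh (θ i)) = (2 * lam) • (fun i => Real.sinh (θ i)) := by
  have hc : ∀ i, Real.cosh (θ i) ≠ 0 := fun i => (Real.cosh_pos _).ne'
  have hs : ∀ i j : Fin n, j ≠ i → (Real.sinh |θ i - θ j|)^3 ≠ 0 := by
    intro i j hij
    have h1 : θ i ≠ θ j := fun h => hij (hθ.injective h.symm)
    have h2 : (0:ℝ) < |θ i - θ j| := abs_pos.mpr (sub_ne_zero.mpr h1)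
    positivity
  constructor
  · funext i
    show (∑ j, A i j * Real.cosh (θ j)) = 0
    have hoff : (∑ j ∈ Finset.univ.erase i, A i j * Real.cosh (θ j))
        = ∑ j ∈ Finset.univ.erase i, m j / (Real.sinh |θ i - θ j|)^3 * Real.cosh (θ j) :=
      Finset.sum_congr rfl (fun j hj => by
        rw [hAoff i j (fun h => (Finset.mem_erase.mp hj).1 h.symm)])
    rw [← Finset.add_sum_erase _ _ (Finset.mem_univ i), hoff,
      hAdiag i, neg_mul, Finset.sum_mul, neg_add_eq_zero]
    refine Finset.sum_congr rfl (fun j hj => ?_)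
    have hsij := hs i j (Finset.mem_erase.mp hj).1
    field_simp
  · funext i
    show (∑ j, A i j * Real.sinh (θ j)) = 2 * lam * Real.sinh (θ i)
    have hoff : (∑ j ∈ Finset.univ.erase i, A i j * Real.sinh (θ j))
        = ∑ j ∈ Finset.univ.erase i, m j / (Real.sinh |θ i - θ j|)^3 * Real.sinh (θ j) :=
      Finset.sum_congr rfl (fun j hj => by
        rw [hAoff i j (fun h => (Finset.mem_erase.mp hj).1 h.symm)])
    rw [← Finset.add_sum_erase _ _ (Finset.mem_univ i), hoff, hAdiag i]
    have key : -(∑ j ∈ Finset.univ.erase i,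
        m j * Real.cosh (θ j) / (Real.cosh (θ i) * (Real.sinh |θ i - θ j|)^3))
          * Real.sinh (θ i)
        + ∑ j ∈ Finset.univ.erase i, m j / (Real.sinh |θ i - θ j|)^3 * Real.sinh (θ j)
        = (∑ j ∈ Finset.univ.erase i,
            m j * Real.sinh (θ j - θ i) / (Real.sinh |θ i - θ j|)^3) / Real.cosh (θ i) := by
      rw [neg_mul, Finset.sum_mul, neg_add_eq_sub, Finset.sum_div, ← Finset.sum_sub_distrib]
      refine Finset.sum_congr rfl (fun j hj => ?_)
      have hsij := hs i j (Finset.mem_erase.mp hj).1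
      rw [Real.sinh_sub]
      field_simp
    rw [key, hcc i, Real.sinh_two_mul]
    field_simp
end

section
/- Under the hypotheses of the previous statement (geodesic central configuration on ℍ¹ with θ_1 < ... < θ_n, multiplier λ, and Σ_i m_i sinh(2θ_i) = 0), let K = {u ∈ ℝⁿ : Σ_i m_i cosh(θ_i) u_i = 0 and u_1/cosh θ_1 ≤ u_2/cosh θ_2 ≤ ... ≤ u_n/cosh θ_n}. Then for every nonzero u ∈ K, Σ_i m_i sinh(θ_i) u_i > 0. -/
open Real Finset

private lemma tanh_strictMono' : StrictMono Real.tanh := by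
  intro x y hxy
  have hx := Real.cosh_pos x
  have hy := Real.cosh_pos y
  have h : Real.tanh y - Real.tanh x = Real.sinh (y - x) / (Real.cosh x * Real.cosh y) := by
    rw [Real.tanh_eq_sinh_div_cosh, Real.tanh_eq_sinh_div_cosh,
      div_sub_div _ _ hy.ne' hx.ne', Real.sinh_sub, mul_comm (Real.cosh x) (Real.cosh y)]
  have hpos : 0 < Real.sinh (y - x) := Real.sinh_pos_iff.mpr (by linarith)
  have : 0 < Real.tanh y - Real.tanh x := by
    rw [h]; positivity
  linarith

theorem stmt13 (n : ℕ) (hn : 2 ≤ n)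
    (θ : Fin n → ℝ) (hθ : StrictMono θ)
    (m : Fin n → ℝ) (hm : ∀ i, 0 < m i) (lam : ℝ)
    -- geodesic central configuration equations on ℍ¹
    (hcc : ∀ i, ∑ j ∈ Finset.univ.erase i,
        m j * Real.sinh (θ j - θ i) / (Real.sinh |θ i - θ j|)^3
        = lam * Real.sinh (2 * θ i))
    (hsum : ∑ i, m i * Real.sinh (2 * θ i) = 0)
    (u : Fin n → ℝ) (hu : u ≠ 0)
    -- u lies in the cone K
    (hK1 : ∑ i, m i * Real.cosh (θ i) * u i = 0)
    (hK2 : ∀ i j, i ≤ j → u i / Real.cosh (θ i) ≤ u j / Real.cosh (θ j)) :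
    0 < ∑ i, m i * Real.sinh (θ i) * u i := by
  set v : Fin n → ℝ := fun i => u i / Real.cosh (θ i) with hv
  set t : Fin n → ℝ := fun i => Real.tanh (θ i) with ht
  set b : Fin n → ℝ := fun i => m i * Real.cosh (θ i) ^ 2 with hb
  have hcosh : ∀ i, 0 < Real.cosh (θ i) := fun i => Real.cosh_pos _
  have hbpos : ∀ i, 0 < b i := fun i => by
    have := hm i; have := hcosh i; positivity
  have hui : ∀ i, u i = v i * Real.cosh (θ i) := fun i => by
    simp only [hv]; rw [div_mul_cancel₀ _ (hcosh i).ne']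
  -- sums
  have hBV : ∑ i, b i * v i = 0 := by
    rw [← hK1]
    apply Finset.sum_congr rfl
    intro i _
    have := (hcosh i).ne'
    have e : u i / Real.cosh (θ i) * Real.cosh (θ i) = u i := div_mul_cancel₀ _ this
    simp only [hb, hv]; linear_combination (m i * Real.cosh (θ i)) * e
  have hBT : ∑ i, b i * t i = 0 := by
    have : ∀ i, b i * t i = (1/2) * (m i * Real.sinh (2 * θ i)) := by
      intro i
      have := (hcosh i).ne'
      rw [hb, ht]
      simp only [Real.tanh_eq_sinh_div_cosh, Real.sinh_two_mul]
      field_simp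
    simp only [this, ← Finset.mul_sum, hsum, mul_zero]
  -- goal sum equals S := ∑ b t v
  have hgoal : ∑ i, m i * Real.sinh (θ i) * u i = ∑ i, b i * (t i * v i) := by
    apply Finset.sum_congr rfl
    intro i _
    have := (hcosh i).ne'
    rw [hui i, hb, ht]
    simp only [Real.tanh_eq_sinh_div_cosh]
    field_simp
  rw [hgoal]
  set S := ∑ i, b i * (t i * v i) with hS
  set B := ∑ i, b i with hBdef
  have hBpos : 0 < B := Finset.sum_pos (fun i _ => hbpos i) ⟨⟨0, by omega⟩, Finset.mem_univ _⟩
  -- key double-sum identity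
  have key : ∑ i, ∑ j, b i * b j * (t i - t j) * (v i - v j) = 2 * B * S := by
    have h1 : ∀ i : Fin n, ∑ j, b i * b j * (t i - t j) * (v i - v j)
        = b i * (t i * v i) * B - b i * t i * (∑ j, b j * v j)
          - b i * v i * (∑ j, b j * t j) + b i * S := by
      intro i
      rw [hBdef, hS, Finset.mul_sum, Finset.mul_sum, Finset.mul_sum, Finset.mul_sum,
        ← Finset.sum_sub_distrib, ← Finset.sum_sub_distrib, ← Finset.sum_add_distrib]
      apply Finset.sum_congr rfl
      intro j _
      ring
    simp only [h1, hBV, hBT, mul_zero, sub_zero, Finset.sum_add_distrib,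
      ← Finset.sum_mul, ← hS, ← hBdef]
    ring
  -- each term is nonnegative
  have hnonneg : ∀ i j : Fin n, 0 ≤ b i * b j * (t i - t j) * (v i - v j) := by
    intro i j
    have hmono : ∀ i j : Fin n, i ≤ j → t i ≤ t j ∧ v i ≤ v j := by
      intro i j hij
      refine ⟨?_, hK2 i j hij⟩
      exact tanh_strictMono'.monotone (hθ.monotone hij)
    have hrw : b i * b j * (t i - t j) * (v i - v j)
        = (b i * b j) * ((t i - t j) * (v i - v j)) := by ring
    rcases le_total i j with h | h
    · obtain ⟨h1, h2⟩ := hmono i j h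
      have hA : 0 ≤ (t i - t j) * (v i - v j) := by nlinarith
      rw [hrw]
      exact mul_nonneg (mul_pos (hbpos i) (hbpos j)).le hA
    · obtain ⟨h1, h2⟩ := hmono j i h
      have hA : 0 ≤ (t i - t j) * (v i - v j) := by nlinarith
      rw [hrw]
      exact mul_nonneg (mul_pos (hbpos i) (hbpos j)).le hA
  -- there is a strictly positive term
  have hex : ∃ i j : Fin n, v i < v j := by
    by_contra h
    push_neg at h
    have hconst : ∀ i, v i = v ⟨0, by omega⟩ := by
      intro i
      have h1 := h ⟨0, by omega⟩ i
      have h2 : v ⟨0, by omega⟩ ≤ v i := hK2 _ _ (by simp [Fin.le_def])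
      linarith
    have hzero : v ⟨0, by omega⟩ = 0 := by
      have : ∑ i, b i * v i = B * v ⟨0, by omega⟩ := by
        rw [hBdef, Finset.sum_mul]
        exact Finset.sum_congr rfl fun i _ => by rw [hconst i]
      rw [hBV] at this
      have := hBpos
      nlinarith [this]
    apply hu
    funext i
    have : v i = 0 := by rw [hconst i, hzero]
    rw [hui i, this, zero_mul]
    rfl
  obtain ⟨i0, j0, hij0⟩ := hex
  have hlt : i0 < j0 := by
    by_contra h
    push_neg at h
    exact absurd (hK2 j0 i0 h) (not_le.mpr hij0)
  have htlt : t i0 < t j0 := tanh_strictMono' (hθ hlt)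
  have hterm : 0 < b i0 * b j0 * (t i0 - t j0) * (v i0 - v j0) := by
    have hrw : b i0 * b j0 * (t i0 - t j0) * (v i0 - v j0)
        = (b i0 * b j0) * ((t j0 - t i0) * (v j0 - v i0)) := by ring
    rw [hrw]
    exact mul_pos (mul_pos (hbpos i0) (hbpos j0))
      (mul_pos (by linarith) (by linarith))
  have hdpos : 0 < ∑ i, ∑ j, b i * b j * (t i - t j) * (v i - v j) := by
    apply Finset.sum_pos'
    · intro i _
      exact Finset.sum_nonneg fun j _ => hnonneg i j
    · exact ⟨i0, Finset.mem_univ _, Finset.sum_pos' (fun j _ => hnonneg i0 j)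
        ⟨j0, Finset.mem_univ _, hterm⟩⟩
  rw [key] at hdpos
  nlinarith
end

section
/- Fix n masses m_1, ..., m_n > 0 on ℍ¹ and consider a sequence q(l) of geodesic configurations θ_1(l) < ... < θ_n(l) satisfying the central configuration equations with multipliers λ(l), and suppose the configurations converge to a collision configuration X (some θ's coinciding in the limit) with at least one cluster of size ≥ 2. Then λ(l) → −∞. -/
open Real Finset Filter


lemma keyA (n : ℕ) (m : Fin n → ℝ) (hm : ∀ i, 0 < m i)
    (θ : ℕ → Fin n → ℝ) (hθ : ∀ l, StrictMono (θ l))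
    (Θ : Fin n → ℝ) (hconv : ∀ i, Tendsto (fun l => θ l i) atTop (nhds (Θ i)))
    (ip im : Fin n) (him : im < ip) (heq : Θ im = Θ ip)
    (hmax : ∀ j, Θ j = Θ ip → j ≤ ip) :
    Tendsto (fun l => ∑ j ∈ Finset.univ.erase ip,
      m j * Real.sinh (θ l j - θ l ip) / (Real.sinh |θ l ip - θ l j|)^3) atTop atBot := by
  set F : ℕ → Fin n → ℝ := fun l j => m j * Real.sinh (θ l j - θ l ip) / (Real.sinh |θ l ip - θ l j|)^3 with hF
  have hsplit : ∀ l, ∑ j ∈ Finset.univ.erase ip, F l j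
      = (∑ j ∈ (Finset.univ.erase ip).filter (fun j => Θ j = Θ ip), F l j)
        + ∑ j ∈ (Finset.univ.erase ip).filter (fun j => ¬ Θ j = Θ ip), F l j := by
    intro l
    exact (Finset.sum_filter_add_sum_filter_not _ _ _).symm
  -- terms in the cluster are nonpositive
  have hneg : ∀ l, ∀ j ∈ (Finset.univ.erase ip).filter (fun j => Θ j = Θ ip), F l j ≤ 0 := by
    intro l j hj
    simp only [Finset.mem_filter, Finset.mem_erase] at hj
    have hjlt : j < ip := lt_of_le_of_ne (hmax j hj.2) hj.1.1
    have hd : 0 < θ l ip - θ l j := sub_pos.mpr (hθ l hjlt)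
    have hnum : Real.sinh (θ l j - θ l ip) < 0 := Real.sinh_neg_iff.mpr (by linarith)
    have hden : 0 < (Real.sinh |θ l ip - θ l j|)^3 := by
      have : 0 < Real.sinh |θ l ip - θ l j| :=
        Real.sinh_pos_iff.mpr (abs_pos.mpr (by linarith))
      positivity
    exact le_of_lt (div_neg_of_neg_of_pos (mul_neg_of_pos_of_neg (hm j) hnum) hden)
  have himmem : im ∈ (Finset.univ.erase ip).filter (fun j => Θ j = Θ ip) := by
    simp [Finset.mem_filter, Finset.mem_erase, ne_of_lt him, heq]
  -- the term at im tends to -∞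
  have hdto : Tendsto (fun l => θ l ip - θ l im) atTop (nhds 0) := by
    have := (hconv ip).sub (hconv im)
    rwa [heq, sub_self] at this
  have hGpos : ∀ l, 0 < Real.sinh (θ l ip - θ l im) :=
    fun l => Real.sinh_pos_iff.mpr (sub_pos.mpr (hθ l him))
  have hG : Tendsto (fun l => (Real.sinh (θ l ip - θ l im))^2) atTop (nhdsWithin 0 (Set.Ioi 0)) := by
    rw [tendsto_nhdsWithin_iff]
    constructor
    · have : Tendsto (fun l => Real.sinh (θ l ip - θ l im)) atTop (nhds 0) := by
        simpa [Function.comp_def] using (Real.continuous_sinh.tendsto 0).comp hdto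
      simpa using this.pow 2
    · exact Filter.Eventually.of_forall fun l => Set.mem_Ioi.mpr (pow_pos (hGpos l) 2)
  have hFim : Tendsto (fun l => F l im) atTop atBot := by
    have h1 : Tendsto (fun l => ((Real.sinh (θ l ip - θ l im))^2)⁻¹) atTop atTop :=
      tendsto_inv_nhdsGT_zero.comp hG
    have h2 : Tendsto (fun l => -(m im * ((Real.sinh (θ l ip - θ l im))^2)⁻¹)) atTop atBot :=
      tendsto_neg_atTop_atBot.comp (h1.const_mul_atTop (hm im))
    refine h2.congr fun l => ?_
    have hd : 0 < θ l ip - θ l im := sub_pos.mpr (hθ l him)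
    have habs : |θ l ip - θ l im| = θ l ip - θ l im := abs_of_pos hd
    have hs : Real.sinh (θ l ip - θ l im) ≠ 0 := ne_of_gt (hGpos l)
    rw [hF]
    simp only [habs]
    rw [show θ l im - θ l ip = -(θ l ip - θ l im) by ring, Real.sinh_neg]
    field_simp
  -- cluster sum tendsto atBot
  have hS1 : Tendsto (fun l => ∑ j ∈ (Finset.univ.erase ip).filter (fun j => Θ j = Θ ip), F l j)
      atTop atBot := by
    refine tendsto_atBot_mono (fun l => ?_) hFim
    calc ∑ j ∈ (Finset.univ.erase ip).filter (fun j => Θ j = Θ ip), F l j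
        = (∑ j ∈ ((Finset.univ.erase ip).filter (fun j => Θ j = Θ ip)).erase im, F l j) + F l im :=
          (Finset.sum_erase_add _ _ himmem).symm
      _ ≤ 0 + F l im := by
          gcongr
          exact Finset.sum_nonpos fun j hj => hneg l j (Finset.mem_of_mem_erase hj)
      _ = F l im := zero_add _
  -- non-cluster sum converges
  have hS2 : Tendsto (fun l => ∑ j ∈ (Finset.univ.erase ip).filter (fun j => ¬ Θ j = Θ ip), F l j)
      atTop (nhds (∑ j ∈ (Finset.univ.erase ip).filter (fun j => ¬ Θ j = Θ ip),
        m j * Real.sinh (Θ j - Θ ip) / (Real.sinh |Θ ip - Θ j|)^3)) := by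
    refine tendsto_finset_sum _ fun j hj => ?_
    simp only [Finset.mem_filter] at hj
    have hne : Θ ip - Θ j ≠ 0 := sub_ne_zero.mpr (Ne.symm hj.2)
    have hden : (Real.sinh |Θ ip - Θ j|)^3 ≠ 0 := by
      have : 0 < Real.sinh |Θ ip - Θ j| := Real.sinh_pos_iff.mpr (abs_pos.mpr hne)
      positivity
    have hnum : Tendsto (fun l => m j * Real.sinh (θ l j - θ l ip)) atTop
        (nhds (m j * Real.sinh (Θ j - Θ ip))) :=
      ((Real.continuous_sinh.tendsto _).comp ((hconv j).sub (hconv ip))).const_mul _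
    have hdent : Tendsto (fun l => (Real.sinh |θ l ip - θ l j|)^3) atTop
        (nhds ((Real.sinh |Θ ip - Θ j|)^3)) := by
      exact (((Real.continuous_sinh.tendsto _).comp
        ((continuous_abs.tendsto _).comp ((hconv ip).sub (hconv j)))).pow 3)
    exact hnum.div hdent hden
  have := hS1.atBot_add hS2
  exact this.congr fun l => (hsplit l).symm


lemma keyB (n : ℕ) (m : Fin n → ℝ) (hm : ∀ i, 0 < m i)
    (θ : ℕ → Fin n → ℝ) (hθ : ∀ l, StrictMono (θ l))
    (Θ : Fin n → ℝ) (hconv : ∀ i, Tendsto (fun l => θ l i) atTop (nhds (Θ i)))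
    (ip im : Fin n) (him : im < ip) (heq : Θ im = Θ ip)
    (hmin : ∀ j, Θ j = Θ im → im ≤ j) :
    Tendsto (fun l => ∑ j ∈ Finset.univ.erase im,
      m j * Real.sinh (θ l j - θ l im) / (Real.sinh |θ l im - θ l j|)^3) atTop atTop := by
  set F : ℕ → Fin n → ℝ := fun l j => m j * Real.sinh (θ l j - θ l im) / (Real.sinh |θ l im - θ l j|)^3 with hF
  have hsplit : ∀ l, ∑ j ∈ Finset.univ.erase im, F l j
      = (∑ j ∈ (Finset.univ.erase im).filter (fun j => Θ j = Θ im), F l j)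
        + ∑ j ∈ (Finset.univ.erase im).filter (fun j => ¬ Θ j = Θ im), F l j := by
    intro l
    exact (Finset.sum_filter_add_sum_filter_not _ _ _).symm
  have hpos : ∀ l, ∀ j ∈ (Finset.univ.erase im).filter (fun j => Θ j = Θ im), 0 ≤ F l j := by
    intro l j hj
    simp only [Finset.mem_filter, Finset.mem_erase] at hj
    have hjlt : im < j := lt_of_le_of_ne (hmin j hj.2) (Ne.symm hj.1.1)
    have hd : 0 < θ l j - θ l im := sub_pos.mpr (hθ l hjlt)
    have hnum : 0 < Real.sinh (θ l j - θ l im) := Real.sinh_pos_iff.mpr hd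
    have hden : 0 < (Real.sinh |θ l im - θ l j|)^3 := by
      have : 0 < Real.sinh |θ l im - θ l j| :=
        Real.sinh_pos_iff.mpr (abs_pos.mpr (by linarith))
      positivity
    exact le_of_lt (div_pos (mul_pos (hm j) hnum) hden)
  have hipmem : ip ∈ (Finset.univ.erase im).filter (fun j => Θ j = Θ im) := by
    simp [Finset.mem_filter, Finset.mem_erase, (ne_of_lt him).symm, heq.symm]
  have hdto : Tendsto (fun l => θ l ip - θ l im) atTop (nhds 0) := by
    have := (hconv ip).sub (hconv im)
    rwa [heq, sub_self] at this
  have hGpos : ∀ l, 0 < Real.sinh (θ l ip - θ l im) :=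
    fun l => Real.sinh_pos_iff.mpr (sub_pos.mpr (hθ l him))
  have hG : Tendsto (fun l => (Real.sinh (θ l ip - θ l im))^2) atTop (nhdsWithin 0 (Set.Ioi 0)) := by
    rw [tendsto_nhdsWithin_iff]
    constructor
    · have : Tendsto (fun l => Real.sinh (θ l ip - θ l im)) atTop (nhds 0) := by
        simpa [Function.comp_def] using (Real.continuous_sinh.tendsto 0).comp hdto
      simpa using this.pow 2
    · exact Filter.Eventually.of_forall fun l => Set.mem_Ioi.mpr (pow_pos (hGpos l) 2)
  have hFip : Tendsto (fun l => F l ip) atTop atTop := by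
    have h1 : Tendsto (fun l => ((Real.sinh (θ l ip - θ l im))^2)⁻¹) atTop atTop :=
      tendsto_inv_nhdsGT_zero.comp hG
    have h2 : Tendsto (fun l => m ip * ((Real.sinh (θ l ip - θ l im))^2)⁻¹) atTop atTop :=
      h1.const_mul_atTop (hm ip)
    refine h2.congr fun l => ?_
    have hd : 0 < θ l ip - θ l im := sub_pos.mpr (hθ l him)
    have habs : |θ l im - θ l ip| = θ l ip - θ l im := by
      rw [abs_sub_comm]; exact abs_of_pos hd
    have hs : Real.sinh (θ l ip - θ l im) ≠ 0 := ne_of_gt (hGpos l)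
    rw [hF]
    simp only [habs]
    field_simp
  have hS1 : Tendsto (fun l => ∑ j ∈ (Finset.univ.erase im).filter (fun j => Θ j = Θ im), F l j)
      atTop atTop := by
    refine tendsto_atTop_mono (fun l => ?_) hFip
    calc F l ip = 0 + F l ip := (zero_add _).symm
      _ ≤ (∑ j ∈ ((Finset.univ.erase im).filter (fun j => Θ j = Θ im)).erase ip, F l j) + F l ip := by
          gcongr
          exact Finset.sum_nonneg fun j hj => hpos l j (Finset.mem_of_mem_erase hj)
      _ = ∑ j ∈ (Finset.univ.erase im).filter (fun j => Θ j = Θ im), F l j :=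
          Finset.sum_erase_add _ _ hipmem
  have hS2 : Tendsto (fun l => ∑ j ∈ (Finset.univ.erase im).filter (fun j => ¬ Θ j = Θ im), F l j)
      atTop (nhds (∑ j ∈ (Finset.univ.erase im).filter (fun j => ¬ Θ j = Θ im),
        m j * Real.sinh (Θ j - Θ im) / (Real.sinh |Θ im - Θ j|)^3)) := by
    refine tendsto_finset_sum _ fun j hj => ?_
    simp only [Finset.mem_filter] at hj
    have hne : Θ im - Θ j ≠ 0 := sub_ne_zero.mpr (Ne.symm hj.2)
    have hden : (Real.sinh |Θ im - Θ j|)^3 ≠ 0 := by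
      have : 0 < Real.sinh |Θ im - Θ j| := Real.sinh_pos_iff.mpr (abs_pos.mpr hne)
      positivity
    have hnum : Tendsto (fun l => m j * Real.sinh (θ l j - θ l im)) atTop
        (nhds (m j * Real.sinh (Θ j - Θ im))) :=
      ((Real.continuous_sinh.tendsto _).comp ((hconv j).sub (hconv im))).const_mul _
    have hdent : Tendsto (fun l => (Real.sinh |θ l im - θ l j|)^3) atTop
        (nhds ((Real.sinh |Θ im - Θ j|)^3)) :=
      (((Real.continuous_sinh.tendsto _).comp
        ((continuous_abs.tendsto _).comp ((hconv im).sub (hconv j)))).pow 3)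
    exact hnum.div hdent hden
  have := hS1.atTop_add hS2
  exact this.congr fun l => (hsplit l).symm


theorem stmt15 (n : ℕ) (hn : 2 ≤ n)
    (m : Fin n → ℝ) (hm : ∀ i, 0 < m i)
    (θ : ℕ → Fin n → ℝ) (hθ : ∀ l, StrictMono (θ l))
    (lam : ℕ → ℝ)
    -- each configuration satisfies the geodesic central configuration equations
    (hcc : ∀ l i, ∑ j ∈ Finset.univ.erase i,
        m j * Real.sinh (θ l j - θ l i) / (Real.sinh |θ l i - θ l j|)^3
        = lam l * Real.sinh (2 * θ l i))
    -- the configurations converge to a collision configuration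
    (Θ : Fin n → ℝ)
    (hconv : ∀ i, Tendsto (fun l => θ l i) atTop (nhds (Θ i)))
    (hcol : ∃ i j, i ≠ j ∧ Θ i = Θ j) :
    Tendsto lam atTop atBot := by
  obtain ⟨i0, j0, hne0, heq0⟩ := hcol
  set C : Finset (Fin n) := Finset.univ.filter (fun k => Θ k = Θ i0) with hC
  have hi0 : i0 ∈ C := by simp [hC]
  have hj0 : j0 ∈ C := by simp [hC, heq0.symm]
  have hCne : C.Nonempty := ⟨i0, hi0⟩
  have hcard : 1 < C.card := Finset.one_lt_card.mpr ⟨i0, hi0, j0, hj0, hne0⟩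
  set ip := C.max' hCne with hip
  set im := C.min' hCne with him'
  have him : im < ip := C.min'_lt_max'_of_card hcard
  have hΘip : Θ ip = Θ i0 := (Finset.mem_filter.mp (C.max'_mem hCne)).2
  have hΘim : Θ im = Θ i0 := (Finset.mem_filter.mp (C.min'_mem hCne)).2
  have heq : Θ im = Θ ip := by rw [hΘim, hΘip]
  have hmax : ∀ j, Θ j = Θ ip → j ≤ ip := fun j hj =>
    C.le_max' j (by simp [hC, hj.trans hΘip])
  have hmin : ∀ j, Θ j = Θ im → im ≤ j := fun j hj =>
    C.min'_le j (by simp [hC, hj.trans hΘim])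
  have hbot : Tendsto (fun l => lam l * Real.sinh (2 * θ l ip)) atTop atBot :=
    ((keyA n m hm θ hθ Θ hconv ip im him heq hmax).congr fun l => hcc l ip)
  have htop : Tendsto (fun l => lam l * Real.sinh (2 * θ l im)) atTop atTop :=
    ((keyB n m hm θ hθ Θ hconv ip im him heq hmin).congr fun l => hcc l im)
  -- boundedness of sinh (2 θ l ip)
  set B0 : ℝ := |Real.sinh (2 * Θ i0)| + 1 with hB0
  have hB0pos : 0 < B0 := by positivity
  have hspconv : Tendsto (fun l => |Real.sinh (2 * θ l ip)|) atTop
      (nhds (|Real.sinh (2 * Θ i0)|)) := by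
    have : Tendsto (fun l => Real.sinh (2 * θ l ip)) atTop (nhds (Real.sinh (2 * Θ ip))) :=
      (Real.continuous_sinh.tendsto _).comp ((hconv ip).const_mul 2)
    rw [hΘip] at this
    exact this.abs
  have habs : ∀ᶠ l in atTop, |Real.sinh (2 * θ l ip)| < B0 :=
    hspconv.eventually_lt_const (by rw [hB0]; linarith)
  rw [tendsto_atBot]
  intro b
  have hK : (0:ℝ) < |b| + 1 := by positivity
  have h1 := hbot.eventually (eventually_le_atBot (-((|b| + 1) * B0)))
  have h2 := htop.eventually (eventually_ge_atTop (1:ℝ))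
  filter_upwards [h1, h2, habs] with l hl1 hl2 hl3
  set sp := Real.sinh (2 * θ l ip) with hsp
  set sm := Real.sinh (2 * θ l im) with hsm
  have hord : sm < sp := Real.sinh_lt_sinh.mpr (by linarith [hθ l him])
  have hKB : 0 < (|b| + 1) * B0 := mul_pos hK hB0pos
  have hlsp : lam l * sp < 0 := lt_of_le_of_lt hl1 (by linarith)
  have hlsm : 0 < lam l * sm := by linarith
  have hprodneg : (lam l * sp) * (lam l * sm) < 0 := mul_neg_of_neg_of_pos hlsp hlsm
  have hspsm : sp * sm < 0 := by
    by_contra h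
    push_neg at h
    have : 0 ≤ (lam l * sp) * (lam l * sm) := by nlinarith [sq_nonneg (lam l)]
    linarith
  have hsm0 : sm < 0 := by
    by_contra h
    push_neg at h
    nlinarith
  have hsp0 : 0 < sp := by
    by_contra h
    push_neg at h
    nlinarith
  have hsple : sp < B0 := lt_of_le_of_lt (le_abs_self _) hl3
  have hlam : lam l ≤ -(|b| + 1) := by
    have h4 : lam l * sp ≤ (-(|b| + 1)) * sp := by nlinarith
    exact le_of_mul_le_mul_right (by linarith [h4]) hsp0
  linarith [neg_abs_le b]
end

section
/- Let n = 3 and let q_1, q_2, q_3 ∈ S² ⊂ ℝ³ be a non-geodesic configuration (the three points and the origin not coplanar... i.e., q_1, q_2, q_3 linearly independent) with equal mutual spherical distances: d_{12} = d_{13} = d_{23} = d, where cos d_{ij} = q_i·q_j. Write q_i = (x_i, y_i, z_i) and suppose the central configuration conditions Σ_i m_i z_i x_i = Σ_i m_i z_i y_i = 0 and (z_1, z_2, z_3) = k(sin³ d_{23}, sin³ d_{13}, sin³ d_{12}) hold for some k ≠ 0, with m_i > 0. Then m_1 = m_2 = m_3. -/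
open Real Finset

/-- Euclidean dot product on ℝ × ℝ × ℝ. -/
def dot3 (a b : ℝ × ℝ × ℝ) : ℝ := a.1 * b.1 + a.2.1 * b.2.1 + a.2.2 * b.2.2

theorem stmt17
    (q : Fin 3 → ℝ × ℝ × ℝ)
    (hunit : ∀ i, dot3 (q i) (q i) = 1)
    -- non-geodesic: the three points are linearly independent
    (hli : LinearIndependent ℝ q)
    (m : Fin 3 → ℝ) (hm : ∀ i, 0 < m i)
    -- mutual distances
    (d : Fin 3 → Fin 3 → ℝ)
    (hd : ∀ i j, i ≠ j → Real.cos (d i j) = dot3 (q i) (q j))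
    (hdpos : ∀ i j, i ≠ j → 0 < d i j ∧ d i j < Real.pi)
    -- equal mutual distances
    (heq1 : d 0 1 = d 0 2) (heq2 : d 0 2 = d 1 2)
    -- central configuration conditions
    (hmzx : ∑ i, m i * (q i).2.2 * (q i).1 = 0)
    (hmzy : ∑ i, m i * (q i).2.2 * (q i).2.1 = 0)
    (k : ℝ) (hk : k ≠ 0)
    (hz0 : (q 0).2.2 = k * (Real.sin (d 1 2))^3)
    (hz1 : (q 1).2.2 = k * (Real.sin (d 0 2))^3)
    (hz2 : (q 2).2.2 = k * (Real.sin (d 0 1))^3) :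
    m 0 = m 1 ∧ m 1 = m 2 := by
  obtain ⟨hp, hl⟩ := hdpos 0 1 (by decide)
  have hs : 0 < Real.sin (d 0 1) := Real.sin_pos_of_pos_of_lt_pi hp hl
  have hc1 : Real.cos (d 0 1) < 1 := by
    nlinarith [Real.sin_sq_add_cos_sq (d 0 1)]
  have hzne : k * Real.sin (d 0 1) ^ 3 ≠ 0 := mul_ne_zero hk (pow_ne_zero 3 hs.ne')
  have hz0' : (q 0).2.2 = k * Real.sin (d 0 1) ^ 3 := by rw [hz0, ← heq2, ← heq1]
  have hz1' : (q 1).2.2 = k * Real.sin (d 0 1) ^ 3 := by rw [hz1, ← heq1]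
  have hz2' : (q 2).2.2 = k * Real.sin (d 0 1) ^ 3 := hz2
  set z := k * Real.sin (d 0 1) ^ 3 with hzdef
  have u0 := hunit 0; have u1 := hunit 1; have u2 := hunit 2
  have c01 := hd 0 1 (by decide)
  have c02 := hd 0 2 (by decide)
  have c12 := hd 1 2 (by decide)
  rw [← heq1] at c02
  rw [← heq2, ← heq1] at c12
  simp only [dot3, hz0', hz1', hz2'] at u0 u1 u2 c01 c02 c12
  rw [Fin.sum_univ_three, hz0', hz1', hz2'] at hmzx hmzy
  have hx : m 0 * (q 0).1 + m 1 * (q 1).1 + m 2 * (q 2).1 = 0 := by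
    have h : z * (m 0 * (q 0).1 + m 1 * (q 1).1 + m 2 * (q 2).1) = 0 := by
      linear_combination hmzx
    exact (mul_eq_zero.mp h).resolve_left hzne
  have hy : m 0 * (q 0).2.1 + m 1 * (q 1).2.1 + m 2 * (q 2).2.1 = 0 := by
    have h : z * (m 0 * (q 0).2.1 + m 1 * (q 1).2.1 + m 2 * (q 2).2.1) = 0 := by
      linear_combination hmzy
    exact (mul_eq_zero.mp h).resolve_left hzne
  constructor
  · have h : (1 - Real.cos (d 0 1)) * (m 0 - m 1) = 0 := by
      linear_combination (-(m 0)) * u0 + m 1 * u1 + (m 1 - m 0) * c01 + m 2 * c02 -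
        m 2 * c12 + ((q 0).1 - (q 1).1) * hx + ((q 0).2.1 - (q 1).2.1) * hy
    rcases mul_eq_zero.mp h with h' | h'
    · linarith
    · linarith
  · have h : (1 - Real.cos (d 0 1)) * (m 1 - m 2) = 0 := by
      linear_combination (-(m 1)) * u1 + m 2 * u2 + (m 2 - m 1) * c12 + m 0 * c01 -
        m 0 * c02 + ((q 1).1 - (q 2).1) * hx + ((q 1).2.1 - (q 2).2.1) * hy
    rcases mul_eq_zero.mp h with h' | h'
    · linarith
    · linarith
end

section
/- Let q = (q_1, ..., q_n) with q_i = (sin θ_i, 0, cos θ_i) ∈ S², −π/4 < θ_1 < ... < θ_n < π/4, satisfying the spherical geodesic central configuration equations Σ_{j≠i} m_i m_j sin(θ_j−θ_i)/sin³(|θ_i−θ_j|) = λ m_i sin(2θ_i) with λ < 0 and m_i > 0. Then the n×n matrix H with H_{ij} = −2 m_i m_j cos(d_{ij})/sin³(d_{ij}) for i ≠ j (d_{ij} = |θ_i − θ_j| < π/2), H_{ii} = 2Σ_{j≠i} m_i m_j cos(d_{ij})/sin³(d_{ij}) − 2λ m_i cos(2θ_i), is positive definite. -/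
open Real Finset Matrix

lemma swap_erase {n : ℕ} (f : Fin n → Fin n → ℝ) :
    ∑ i, ∑ j ∈ Finset.univ.erase i, f i j
      = ∑ i, ∑ j ∈ Finset.univ.erase i, f j i := by
  have h : ∀ i : Fin n, (Finset.univ.erase i) = Finset.univ.filter (fun j => j ≠ i) := by
    intro i; ext j; simp [Finset.mem_erase]
  simp only [h, Finset.sum_filter]
  rw [Finset.sum_comm]
  congr 1; ext i; congr 1; ext j
  by_cases hij : i = j <;> simp [hij, Ne.symm]

theorem stmt18 (n : ℕ)
    (θ : Fin n → ℝ) (hθ : StrictMono θ)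
    (hlb : ∀ i, -(Real.pi/4) < θ i) (hub : ∀ i, θ i < Real.pi/4)
    (m : Fin n → ℝ) (hm : ∀ i, 0 < m i)
    (lam : ℝ) (hlam : lam < 0)
    -- spherical geodesic central configuration equations
    (hcc : ∀ i, ∑ j ∈ Finset.univ.erase i,
        m i * m j * Real.sin (θ j - θ i) / (Real.sin |θ i - θ j|)^3
        = lam * m i * Real.sin (2 * θ i))
    (H : Matrix (Fin n) (Fin n) ℝ)
    (hHoff : ∀ i j, i ≠ j →
      H i j = -2 * m i * m j * Real.cos |θ i - θ j| / (Real.sin |θ i - θ j|)^3)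
    (hHdiag : ∀ i, H i i =
      2 * (∑ j ∈ Finset.univ.erase i,
        m i * m j * Real.cos |θ i - θ j| / (Real.sin |θ i - θ j|)^3)
      - 2 * lam * m i * Real.cos (2 * θ i)) :
    H.PosDef := by
  set w : Fin n → Fin n → ℝ :=
    fun i j => 2 * m i * m j * Real.cos |θ i - θ j| / (Real.sin |θ i - θ j|)^3 with hw
  set d : Fin n → ℝ := fun i => -2 * lam * m i * Real.cos (2 * θ i) with hd
  have habs : ∀ i j : Fin n, i ≠ j → 0 < |θ i - θ j| ∧ |θ i - θ j| < Real.pi / 2 := by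
    intro i j hij
    refine ⟨?_, ?_⟩
    · rw [abs_pos, sub_ne_zero]
      exact fun h => hij (hθ.injective h)
    · rw [abs_sub_lt_iff]
      constructor <;> [linarith [hlb j, hub i]; linarith [hlb i, hub j]]
  have hsym : ∀ i j : Fin n, w i j = w j i := by
    intro i j; simp only [hw, abs_sub_comm (θ i) (θ j)]; ring
  have hwpos : ∀ i j : Fin n, i ≠ j → 0 < w i j := by
    intro i j hij
    obtain ⟨h1, h2⟩ := habs i j hij
    have hs : 0 < Real.sin |θ i - θ j| :=
      Real.sin_pos_of_pos_of_lt_pi h1 (by linarith [Real.pi_pos])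
    have hc : 0 < Real.cos |θ i - θ j| :=
      Real.cos_pos_of_mem_Ioo ⟨by linarith [Real.pi_pos], h2⟩
    have := hm i; have := hm j
    positivity
  have hdpos : ∀ i : Fin n, 0 < d i := by
    intro i
    have hc : 0 < Real.cos (2 * θ i) := by
      apply Real.cos_pos_of_mem_Ioo
      constructor <;> [linarith [hlb i]; linarith [hub i]]
    have hmc := mul_pos (mul_pos (neg_pos.mpr hlam) (hm i)) hc
    simp only [hd]; nlinarith
  constructor
  · show Hᴴ = H
    ext i j
    simp only [Matrix.conjTranspose_apply, star_trivial]
    by_cases hij : i = j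
    · subst hij; rfl
    · rw [hHoff j i (Ne.symm hij), hHoff i j hij, abs_sub_comm (θ j) (θ i)]; ring
  · intro x hx
    have hQ : (x.sum fun i xi => x.sum fun j xj => star xi * H i j * xj) = ∑ i, ∑ j, x i * H i j * x j := by
      simp [Finsupp.sum_fintype]
    rw [hQ]
    have hsplit : ∑ i, ∑ j, x i * H i j * x j
        = ∑ i, d i * (x i)^2
          + ∑ i, ∑ j ∈ Finset.univ.erase i, w i j * (x i * (x i - x j)) := by
      rw [← Finset.sum_add_distrib]
      apply Finset.sum_congr rfl
      intro i _
      have h2sum : (2:ℝ) * (∑ j ∈ Finset.univ.erase i,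
          m i * m j * Real.cos |θ i - θ j| / (Real.sin |θ i - θ j|)^3)
          = ∑ j ∈ Finset.univ.erase i, w i j := by
        rw [Finset.mul_sum]
        exact Finset.sum_congr rfl (fun j _ => by simp only [hw]; ring)
      have hoff : ∑ j ∈ Finset.univ.erase i, x i * H i j * x j
          = (∑ j ∈ Finset.univ.erase i, w i j * (x i * (x i - x j)))
            - (∑ j ∈ Finset.univ.erase i, w i j) * x i ^ 2 := by
        rw [Finset.sum_mul, ← Finset.sum_sub_distrib]
        apply Finset.sum_congr rfl
        intro j hj
        rw [hHoff i j (Ne.symm (Finset.ne_of_mem_erase hj))]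
        simp only [hw]; ring
      rw [← Finset.add_sum_erase _ _ (Finset.mem_univ i), hoff, hHdiag i, h2sum]
      simp only [hd]; ring
    rw [hsplit]
    have hS : 0 ≤ ∑ i, ∑ j ∈ Finset.univ.erase i, w i j * (x i * (x i - x j)) := by
      have h2 : 2 * ∑ i, ∑ j ∈ Finset.univ.erase i, w i j * (x i * (x i - x j))
          = ∑ i, ∑ j ∈ Finset.univ.erase i, w i j * (x i - x j)^2 := by
        rw [two_mul]
        nth_rewrite 2 [swap_erase (fun i j => w i j * (x i * (x i - x j)))]
        rw [← Finset.sum_add_distrib]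
        apply Finset.sum_congr rfl
        intro i _
        rw [← Finset.sum_add_distrib]
        apply Finset.sum_congr rfl
        intro j _
        rw [hsym j i]; ring
      have hr : 0 ≤ ∑ i, ∑ j ∈ Finset.univ.erase i, w i j * (x i - x j)^2 := by
        apply Finset.sum_nonneg
        intro i _
        apply Finset.sum_nonneg
        intro j hj
        have := hwpos i j (Ne.symm (Finset.ne_of_mem_erase hj))
        positivity
      linarith
    have hD : 0 < ∑ i, d i * (x i)^2 := by
      obtain ⟨k, hk⟩ := Finsupp.ne_iff.mp hx
      apply Finset.sum_pos'
      · intro i _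
        have := hdpos i
        positivity
      · refine ⟨k, Finset.mem_univ k, ?_⟩
        have := hdpos k
        have hk' : x k ≠ 0 := hk
        have hk2 : (0:ℝ) < x k ^ 2 := by positivity
        exact mul_pos this hk2
    linarith
end

section
/- Let θ_1 < ... < θ_n and masses m_i > 0 be a solution of the geodesic central configuration equations on ℍ¹ with multiplier λ, and let A be the matrix A_{ij} = m_j/sinh³(d_{ij}) (i ≠ j), A_{ii} = −Σ_{j≠i} m_j cosh θ_j/(cosh θ_i sinh³ d_{ij}), where d_{ij} = |θ_i − θ_j|. Let M = diag(m_i), C = diag(cosh θ_i). Then the matrix CMAC is symmetric and the row sums of CMAC are all zero. -/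
open Real Finset Matrix

theorem stmt19 (n : ℕ)
    (θ : Fin n → ℝ) (hθ : StrictMono θ)
    (m : Fin n → ℝ) (hm : ∀ i, 0 < m i) (lam : ℝ)
    -- geodesic central configuration equations on ℍ¹
    (hcc : ∀ i, ∑ j ∈ Finset.univ.erase i,
        m j * Real.sinh (θ j - θ i) / (Real.sinh |θ i - θ j|)^3
        = lam * Real.sinh (2 * θ i))
    (A : Matrix (Fin n) (Fin n) ℝ)
    (hAoff : ∀ i j, i ≠ j → A i j = m j / (Real.sinh |θ i - θ j|)^3)
    (hAdiag : ∀ i, A i i = - ∑ j ∈ Finset.univ.erase i,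
        m j * Real.cosh (θ j) / (Real.cosh (θ i) * (Real.sinh |θ i - θ j|)^3))
    (M C : Matrix (Fin n) (Fin n) ℝ)
    (hM : M = Matrix.diagonal m)
    (hC : C = Matrix.diagonal (fun i => Real.cosh (θ i))) :
    (C * M * A * C).IsSymm ∧ ∀ i, ∑ j, (C * M * A * C) i j = 0 := by
  subst hM hC
  have hent : ∀ i j, (Matrix.diagonal (fun i => Real.cosh (θ i)) * Matrix.diagonal m * A *
      Matrix.diagonal (fun i => Real.cosh (θ i))) i j
      = Real.cosh (θ i) * m i * A i j * Real.cosh (θ j) := by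
    intro i j
    rw [Matrix.diagonal_mul_diagonal]
    rw [Matrix.mul_diagonal, Matrix.diagonal_mul]
  constructor
  · rw [Matrix.IsSymm]
    ext i j
    rw [Matrix.transpose_apply, hent, hent]
    by_cases hij : i = j
    · subst hij; ring
    · rw [hAoff i j (fun h => hij h), hAoff j i (fun h => hij h.symm), abs_sub_comm]
      ring
  · intro i
    simp only [hent]
    rw [← Finset.add_sum_erase _ _ (Finset.mem_univ i)]
    have h1 : Real.cosh (θ i) * m i * A i i * Real.cosh (θ i)
        = - ∑ j ∈ Finset.univ.erase i,
            Real.cosh (θ i) * m i * (m j / (Real.sinh |θ i - θ j|)^3) * Real.cosh (θ j) := by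
      rw [hAdiag i, mul_neg, neg_mul, neg_inj, Finset.mul_sum, Finset.sum_mul]
      refine Finset.sum_congr rfl fun j hj => ?_
      have hc : Real.cosh (θ i) ≠ 0 := (Real.cosh_pos (θ i)).ne'
      have hij : i ≠ j := (Finset.ne_of_mem_erase hj).symm
      have hs : Real.sinh |θ i - θ j| ≠ 0 := by
        intro h
        have := Real.sinh_eq_zero.mp h
        have : θ i = θ j := by
          have := abs_eq_zero.mp this
          linarith
        exact hij (hθ.injective this)
      field_simp
    rw [h1]
    rw [← Finset.sum_neg_distrib]
    rw [← Finset.sum_add_distrib]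
    refine Finset.sum_eq_zero fun j hj => ?_
    rw [hAoff i j (Finset.ne_of_mem_erase hj).symm]
    ring
end
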